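/- Global identification (paper's Theorem 3.3): under all the listed assumptions, if (ψ₀, ψ₁) ∈ 𝒫 satisfies, for every w ∈ ℝ, P(T ≤ ψ₀ and Z > T and W ≤ w) + P(T ≤ ψ₁(Z) and Z ≤ T and W ≤ w) = (1 − exp(−u)) · P(W ≤ w), then almost surely ψ₀·1{Z > ψ₀} + ψ₁(Z)·1{Z ≤ ψ₀} = s*·1{Z > s*} + g*(Z)·1{Z ≤ s*}; that is, the induced regression function of ψ equals φ(·,u) evaluated at Z almost surely. -/

import Mathlib

open MeasureTheory ProbabilityTheory Set Filter

section Aux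
variable {α : Type*} [MeasurableSpace α]

lemma sm_setIntegral_Ioc
    (f : ℝ → α → ℝ) (hfmeas : Measurable fun p : ℝ × α => f p.1 p.2)
    (a b : α → ℝ) (ha : Measurable a) (hb : Measurable b) :
    StronglyMeasurable fun x => ∫ e, (Set.Ioc (a x) (b x)).indicator (fun e => f e x) e := by
  have hq : Measurable fun p : α × ℝ =>
      (Set.Ioc (a p.1) (b p.1)).indicator (fun e => f e p.1) p.2 := by
    have : (fun p : α × ℝ => (Set.Ioc (a p.1) (b p.1)).indicator (fun e => f e p.1) p.2)
        = fun p : α × ℝ => if a p.1 < p.2 ∧ p.2 ≤ b p.1 then f p.2 p.1 else 0 := by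
      funext p; simp [Set.indicator_apply, Set.mem_Ioc]
    rw [this]
    exact Measurable.ite
      ((measurableSet_lt (ha.comp measurable_fst) measurable_snd).inter
        (measurableSet_le measurable_snd (hb.comp measurable_fst)))
      (hfmeas.comp (measurable_snd.prodMk measurable_fst)) measurable_const
  exact hq.stronglyMeasurable.integral_prod_right'

/-- Strong measurability of a parametric set integral over `Iic (ℓ x)`. -/
lemma sm_setIntegral_Iic
    (f : ℝ → α → ℝ) (hfmeas : Measurable fun p : ℝ × α => f p.1 p.2)
    (ℓ : α → ℝ) (hℓ : Measurable ℓ) :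
    StronglyMeasurable fun x => ∫ e in Set.Iic (ℓ x), f e x := by
  have hrw : (fun x => ∫ e in Set.Iic (ℓ x), f e x)
      = fun x => ∫ e, (Set.Iic (ℓ x)).indicator (fun e => f e x) e := by
    funext x; rw [integral_indicator measurableSet_Iic]
  rw [hrw]
  have hq : Measurable fun p : α × ℝ => (Set.Iic (ℓ p.1)).indicator (fun e => f e p.1) p.2 := by
    have : (fun p : α × ℝ => (Set.Iic (ℓ p.1)).indicator (fun e => f e p.1) p.2)
        = fun p : α × ℝ => if p.2 ≤ ℓ p.1 then f p.2 p.1 else 0 := by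
      funext p; simp [Set.indicator_apply]
    rw [this]
    exact Measurable.ite (measurableSet_le measurable_snd (hℓ.comp measurable_fst))
      (hfmeas.comp (measurable_snd.prodMk measurable_fst)) measurable_const
  exact hq.stronglyMeasurable.integral_prod_right'

/-- Strong measurability of a parametric interval integral `∫ e in 0..ℓ x`. -/
lemma sm_intervalIntegral
    (f : ℝ → α → ℝ) (hfmeas : Measurable fun p : ℝ × α => f p.1 p.2)
    (ℓ : α → ℝ) (hℓ : Measurable ℓ) :
    StronglyMeasurable fun x => ∫ e in (0:ℝ)..(ℓ x), f e x := by
  have hrw : (fun x => ∫ e in (0:ℝ)..(ℓ x), f e x)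
      = fun x => (∫ e, (Set.Ioc 0 (ℓ x)).indicator (fun e => f e x) e)
          - (∫ e, (Set.Ioc (ℓ x) 0).indicator (fun e => f e x) e) := by
    funext x
    by_cases hx : (0:ℝ) ≤ ℓ x
    · rw [intervalIntegral.integral_of_le hx, integral_indicator measurableSet_Ioc,
        integral_indicator measurableSet_Ioc,
        Set.Ioc_eq_empty (not_lt.mpr hx)]
      simp
    · push_neg at hx
      rw [intervalIntegral.integral_symm, intervalIntegral.integral_of_le hx.le,
        integral_indicator measurableSet_Ioc, integral_indicator measurableSet_Ioc,
        Set.Ioc_eq_empty (not_lt.mpr hx.le)]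
      simp
  rw [hrw]
  exact (sm_setIntegral_Ioc f hfmeas (fun _ => 0) ℓ measurable_const hℓ).sub
    (sm_setIntegral_Ioc f hfmeas ℓ (fun _ => 0) hℓ measurable_const)

end Aux

lemma norm_mul3_le_one {a b c : ℝ} (ha : |a| ≤ 1) (hb : |b| ≤ 1) (hc : |c| ≤ 1) :
    ‖a * b * c‖ ≤ 1 := by
  rw [Real.norm_eq_abs, abs_mul, abs_mul]
  have hab : |a| * |b| ≤ 1 := by nlinarith [abs_nonneg a, abs_nonneg b]
  nlinarith [abs_nonneg c, mul_nonneg (abs_nonneg a) (abs_nonneg b)]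

section Workhorse

variable {Ω : Type*} [MeasureSpace Ω] [IsProbabilityMeasure (ℙ : Measure Ω)]
variable {α : Type*} [MeasurableSpace α]

/-- The main workhorse: from the density representation of the conditional law of `ε`,
derive integrability of the interval-integral weight and the key difference identity. -/
lemma workhorse
    (X : Ω → α) (hX : Measurable X) (ρ : Ω → ℝ) (ε : Ω → ℝ)
    (hρ : Measurable ρ) (hρ01 : ∀ ω, ρ ω = 0 ∨ ρ ω = 1) (hε : Measurable ε)
    (f : ℝ → α → ℝ) (hfmeas : Measurable fun p : ℝ × α => f p.1 p.2)
    (hfnn : ∀ e x, 0 ≤ f e x)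
    (hdens : ∀ ℓ h : α → ℝ, Measurable ℓ → (∃ M, ∀ x, |ℓ x| ≤ M) →
      Measurable h → (∃ M, ∀ x, |h x| ≤ M) →
      (∫ ω, (if ε ω ≤ ℓ (X ω) then (1:ℝ) else 0) * ρ ω * h (X ω) ∂ℙ)
        = ∫ ω, ρ ω * h (X ω) * (∫ e in Set.Iic (ℓ (X ω)), f e (X ω)) ∂ℙ)
    (ℓ : α → ℝ) (hℓ : Measurable ℓ) (c₀ : ℝ) (hc₀ : 0 ≤ c₀) (hℓb : ∀ x, |ℓ x| ≤ c₀)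
    (h : α → ℝ) (hh : Measurable h) (hhb : ∀ x, |h x| ≤ 1) :
    Integrable (fun ω => ρ ω * (∫ e in (0:ℝ)..(ℓ (X ω)), f e (X ω))) ℙ ∧
    (∫ ω, (if ε ω ≤ ℓ (X ω) then (1:ℝ) else 0) * ρ ω * h (X ω) ∂ℙ)
      - (∫ ω, (if ε ω ≤ (0:ℝ) then (1:ℝ) else 0) * ρ ω * h (X ω) ∂ℙ)
      = ∫ ω, ρ ω * h (X ω) * (∫ e in (0:ℝ)..(ℓ (X ω)), f e (X ω)) ∂ℙ := by
  have hρnn : ∀ ω, 0 ≤ ρ ω := fun ω => by rcases hρ01 ω with h' | h' <;> rw [h'] <;> norm_num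
  have hρle1 : ∀ ω, ρ ω ≤ 1 := fun ω => by rcases hρ01 ω with h' | h' <;> rw [h'] <;> norm_num
  have hρabs : ∀ ω, |ρ ω| ≤ 1 := fun ω => by
    rw [abs_of_nonneg (hρnn ω)]; exact hρle1 ω
  -- the bad set where `f (·, x)` is not integrable on `Iic c₀`
  set B : Set α := {x | ∫⁻ e in Set.Iic c₀, ENNReal.ofReal (f e x) = ⊤} with hBdef
  have hsec : ∀ x : α, Measurable fun e : ℝ => f e x := fun x =>
    hfmeas.comp (measurable_id.prodMk measurable_const)
  have hlm : Measurable fun x => ∫⁻ e in Set.Iic c₀, ENNReal.ofReal (f e x) := by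
    have : Measurable fun p : α × ℝ => ENNReal.ofReal (f p.2 p.1) :=
      ENNReal.measurable_ofReal.comp (hfmeas.comp (measurable_snd.prodMk measurable_fst))
    exact Measurable.lintegral_prod_right' (ν := volume.restrict (Set.Iic c₀)) this
  have hBmeas : MeasurableSet B := hlm (measurableSet_singleton ⊤)
  -- integrability on `Iic c` characterization
  have hIntOn : ∀ (x : α) (c : ℝ), IntegrableOn (fun e => f e x) (Set.Iic c) volume ↔
      ∫⁻ e in Set.Iic c, ENNReal.ofReal (f e x) < ⊤ := by
    intro x c
    rw [IntegrableOn, Integrable, hasFiniteIntegral_iff_ofReal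
      (Eventually.of_forall fun e => hfnn e x)]
    exact ⟨fun h' => h'.2, fun h' => ⟨(hsec x).aestronglyMeasurable.restrict, h'⟩⟩
  have hnotB : ∀ x, x ∉ B → IntegrableOn (fun e => f e x) (Set.Iic c₀) volume := by
    intro x hx
    rw [hIntOn]
    exact lt_top_iff_ne_top.mpr hx
  have hBzero : ∀ x ∈ B, ∀ c, c₀ ≤ c → (∫ e in Set.Iic c, f e x) = 0 := by
    intro x hx c hc
    apply integral_undef
    intro hcon
    have hcon' : IntegrableOn (fun e => f e x) (Set.Iic c) volume := hcon
    have h1 := (hIntOn x c₀).mp (hcon'.mono_set (Set.Iic_subset_Iic.mpr hc))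
    exact h1.ne hx
  -- the indicator of `B`
  set hB : α → ℝ := fun x => if x ∈ B then 1 else 0 with hBfun
  have hhBmeas : Measurable hB := Measurable.ite hBmeas measurable_const measurable_const
  have hhBb : ∀ x, |hB x| ≤ 1 := fun x => by
    simp only [hBfun]; split <;> norm_num
  -- Step W2 : a.e. ω, ρ ω = 0 ∨ X ω ∉ B
  have hae : ∀ᵐ ω ∂ℙ, ρ ω = 0 ∨ X ω ∉ B := by
    have hzero : ∀ n : ℕ, (∫ ω, (if ε ω ≤ c₀ + (n:ℝ) then (1:ℝ) else 0)
        * ρ ω * hB (X ω) ∂ℙ) = 0 := by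
      intro n
      rw [hdens (fun _ => c₀ + (n:ℝ)) hB measurable_const ⟨|c₀ + n|, fun _ => le_refl _⟩
        hhBmeas ⟨1, hhBb⟩]
      refine integral_eq_zero_of_ae (Eventually.of_forall fun ω => ?_)
      simp only [Pi.zero_apply]
      by_cases hx : X ω ∈ B
      · rw [hBzero (X ω) hx (c₀ + n) (le_add_of_nonneg_right (Nat.cast_nonneg n))]; ring
      · simp [hBfun, hx]
    have hmeas_n : ∀ n : ℕ, AEStronglyMeasurable
        (fun ω => (if ε ω ≤ c₀ + (n:ℝ) then (1:ℝ) else 0) * ρ ω * hB (X ω)) ℙ := by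
      intro n
      refine AEStronglyMeasurable.mul (AEStronglyMeasurable.mul ?_ hρ.aestronglyMeasurable)
        ((hhBmeas.comp hX)).aestronglyMeasurable
      exact (Measurable.ite (measurableSet_le hε measurable_const)
        measurable_const measurable_const).aestronglyMeasurable
    have hlim : Tendsto (fun n : ℕ => ∫ ω, (if ε ω ≤ c₀ + (n:ℝ) then (1:ℝ) else 0)
        * ρ ω * hB (X ω) ∂ℙ) atTop (nhds (∫ ω, 1 * ρ ω * hB (X ω) ∂ℙ)) := by
      apply tendsto_integral_of_dominated_convergence (fun _ => 1) hmeas_n (integrable_const 1)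
      · intro n
        filter_upwards with ω
        exact norm_mul3_le_one (by split <;> norm_num) (hρabs ω) (hhBb (X ω))
      · filter_upwards with ω
        apply tendsto_const_nhds.congr'
        obtain ⟨N, hN⟩ := exists_nat_ge (ε ω - c₀)
        rw [Filter.EventuallyEq, eventually_atTop]
        refine ⟨N, fun n hn => ?_⟩
        have : (N:ℝ) ≤ n := Nat.cast_le.mpr hn
        rw [if_pos (by linarith)]
    have h0 : Tendsto (fun n : ℕ => ∫ ω, (if ε ω ≤ c₀ + (n:ℝ) then (1:ℝ) else 0)
        * ρ ω * hB (X ω) ∂ℙ) atTop (nhds 0) := by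
      simp only [hzero]
      exact tendsto_const_nhds
    have hint0 : (∫ ω, 1 * ρ ω * hB (X ω) ∂ℙ) = 0 := tendsto_nhds_unique hlim h0
    have hint : Integrable (fun ω => ρ ω * hB (X ω)) ℙ := by
      refine Integrable.mono' (integrable_const 1)
        (hρ.mul (hhBmeas.comp hX)).aestronglyMeasurable ?_
      filter_upwards with ω
      have := norm_mul3_le_one (a := 1) (by norm_num) (hρabs ω) (hhBb (X ω))
      simpa using this
    have hint0' : (∫ ω, ρ ω * hB (X ω) ∂ℙ) = 0 := by
      rw [← hint0]; congr 1; funext ω; ring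
    have hzz := (integral_eq_zero_iff_of_nonneg (fun ω => mul_nonneg (hρnn ω)
      (by simp only [hBfun]; split <;> norm_num)) hint).mp hint0'
    filter_upwards [hzz] with ω hω
    simp only [Pi.zero_apply] at hω
    rcases mul_eq_zero.mp hω with h' | h'
    · exact Or.inl h'
    · right
      intro hmem
      rw [hBfun] at h'
      simp only [if_pos hmem] at h'
      norm_num at h'
  -- notation for the CDF-like object
  set F : ℝ → α → ℝ := fun c x => ∫ e in Set.Iic c, f e x with hFdef
  have hFsm : ∀ ℓ' : α → ℝ, Measurable ℓ' → StronglyMeasurable fun x => F (ℓ' x) x :=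
    fun ℓ' hℓ' => sm_setIntegral_Iic f hfmeas ℓ' hℓ'
  have hFc₀sm : StronglyMeasurable fun x => F c₀ x := hFsm (fun _ => c₀) measurable_const
  have hFnn : ∀ c (x : α), 0 ≤ F c x := fun c x =>
    setIntegral_nonneg measurableSet_Iic fun e _ => hfnn e x
  have hFmono : ∀ x, x ∉ B → ∀ c, c ≤ c₀ → F c x ≤ F c₀ x := by
    intro x hx c hc
    exact setIntegral_mono_set (hnotB x hx) (Eventually.of_forall fun e => hfnn e x)
      (HasSubset.Subset.eventuallyLE (Set.Iic_subset_Iic.mpr hc))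
  have habs_int : ∀ g : Ω → ℝ, (∀ ω, ‖g ω‖ ≤ 1) → |∫ ω, g ω ∂ℙ| ≤ 1 := by
    intro g hg
    have := norm_integral_le_of_norm_le_const (μ := (ℙ : Measure Ω)) (C := 1)
      (Eventually.of_forall hg)
    simpa using this
  -- Step W3 : integrability of `ρ · F c₀ (X ·)`
  have hIntF : Integrable (fun ω => ρ ω * F c₀ (X ω)) ℙ := by
    set A : ℕ → Set α := fun n => {x | x ∉ B ∧ F c₀ x ≤ n} with hAdef
    have hAmeas : ∀ n, MeasurableSet (A n) := fun n =>
      hBmeas.compl.inter (hFc₀sm.measurable measurableSet_Iic)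
    set hA : ℕ → α → ℝ := fun n x => if x ∈ A n then 1 else 0 with hAfun
    have hhAmeas : ∀ n, Measurable (hA n) := fun n =>
      Measurable.ite (hAmeas n) measurable_const measurable_const
    have hhAb : ∀ n x, |hA n x| ≤ 1 := fun n x => by
      simp only [hAfun]; split <;> norm_num
    have hhAnn : ∀ n x, 0 ≤ hA n x := fun n x => by
      simp only [hAfun]; split <;> norm_num
    set g : ℕ → Ω → ℝ := fun n ω => ρ ω * hA n (X ω) * F c₀ (X ω) with hgdef
    have hgnn : ∀ n ω, 0 ≤ g n ω := fun n ω =>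
      mul_nonneg (mul_nonneg (hρnn ω) (hhAnn n (X ω))) (hFnn c₀ (X ω))
    have hgmeas : ∀ n, Measurable (g n) := fun n =>
      ((hρ.mul ((hhAmeas n).comp hX)).mul (hFc₀sm.measurable.comp hX))
    have hgle : ∀ n ω, g n ω ≤ (n:ℝ) := by
      intro n ω
      simp only [hgdef, hAfun]
      split
      · rename_i hmem
        have h1 := hmem.2
        have := hFnn c₀ (X ω)
        nlinarith [hρnn ω, hρle1 ω]
      · simp only [mul_zero, zero_mul]; positivity
    have hgint : ∀ n, Integrable (g n) ℙ := by
      intro n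
      refine Integrable.mono' (integrable_const (n:ℝ)) (hgmeas n).aestronglyMeasurable ?_
      filter_upwards with ω
      rw [Real.norm_eq_abs, abs_of_nonneg (hgnn n ω)]
      exact hgle n ω
    have hgval : ∀ n, (∫ ω, g n ω ∂ℙ) ≤ 1 := by
      intro n
      have heq := hdens (fun _ => c₀) (hA n) measurable_const ⟨|c₀|, fun _ => le_refl _⟩
        (hhAmeas n) ⟨1, hhAb n⟩
      have : (∫ ω, g n ω ∂ℙ) = ∫ ω, (if ε ω ≤ c₀ then (1:ℝ) else 0) * ρ ω * hA n (X ω) ∂ℙ := by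
        rw [heq]
      rw [this]
      have := habs_int (fun ω => (if ε ω ≤ c₀ then (1:ℝ) else 0) * ρ ω * hA n (X ω))
        (fun ω => norm_mul3_le_one (by split <;> norm_num) (hρabs ω) (hhAb n (X ω)))
      exact le_trans (le_abs_self _) this
    -- pass to lintegrals
    have hgmono : ∀ (n m : ℕ), n ≤ m → ∀ ω, g n ω ≤ g m ω := by
      intro n m hnm ω
      simp only [hgdef, hAfun]
      have hle : ∀ b1 b2 : ℝ, b1 ≤ b2 → ρ ω * b1 * F c₀ (X ω) ≤ ρ ω * b2 * F c₀ (X ω) := by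
        intro b1 b2 hb
        nlinarith [mul_nonneg (mul_nonneg (hρnn ω) (sub_nonneg.mpr hb)) (hFnn c₀ (X ω))]
      apply hle
      split
      · rename_i hmem
        have hmem' : X ω ∉ B ∧ F c₀ (X ω) ≤ (n:ℝ) := hmem
        have hmemm : X ω ∈ A m := by
          simp only [hAdef, Set.mem_setOf_eq]
          exact ⟨hmem'.1, le_trans hmem'.2 (Nat.cast_le.mpr hnm)⟩
        rw [if_pos hmemm]
      · split <;> norm_num
    have hsup : ∀ ω, (⨆ n, ENNReal.ofReal (g n ω)) = ENNReal.ofReal (ρ ω * F c₀ (X ω)) := by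
      intro ω
      by_cases hx : X ω ∈ B
      · have hF0 : F c₀ (X ω) = 0 := hBzero (X ω) hx c₀ le_rfl
        have : ∀ n, g n ω = 0 := by
          intro n
          simp only [hgdef, hAfun, hF0, mul_zero]
        simp [this, hF0]
      · obtain ⟨N, hN⟩ := exists_nat_ge (F c₀ (X ω))
        have hmemN : X ω ∈ A N := by
          simp only [hAdef, Set.mem_setOf_eq]
          exact ⟨hx, hN⟩
        have hval : g N ω = ρ ω * F c₀ (X ω) := by
          simp only [hgdef, hAfun, if_pos hmemN, mul_one]
        apply le_antisymm
        · refine iSup_le fun n => ENNReal.ofReal_le_ofReal ?_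
          simp only [hgdef, hAfun]
          have h1 : (if X ω ∈ A n then (1:ℝ) else 0) ≤ 1 := by split <;> norm_num
          have h2 : (0:ℝ) ≤ (if X ω ∈ A n then (1:ℝ) else 0) := by split <;> norm_num
          nlinarith [hρnn ω, hFnn c₀ (X ω),
            mul_nonneg (mul_nonneg (hρnn ω) (sub_nonneg.mpr h1)) (hFnn c₀ (X ω))]
        · rw [← hval]
          exact le_iSup (fun n => ENNReal.ofReal (g n ω)) N
    have hlsup : (∫⁻ ω, ENNReal.ofReal (ρ ω * F c₀ (X ω)) ∂ℙ) ≤ 1 := by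
      have hmct := lintegral_iSup (μ := (ℙ : Measure Ω))
        (f := fun n ω => ENNReal.ofReal (g n ω))
        (fun n => ENNReal.measurable_ofReal.comp (hgmeas n))
        (fun n m hnm ω => ENNReal.ofReal_le_ofReal (hgmono n m hnm ω))
      calc (∫⁻ ω, ENNReal.ofReal (ρ ω * F c₀ (X ω)) ∂ℙ)
          = ∫⁻ ω, ⨆ n, ENNReal.ofReal (g n ω) ∂ℙ := by
            congr 1; funext ω; rw [hsup ω]
        _ = ⨆ n, ∫⁻ ω, ENNReal.ofReal (g n ω) ∂ℙ := hmct
        _ ≤ 1 := by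
            refine iSup_le fun n => ?_
            rw [← ofReal_integral_eq_lintegral_ofReal (hgint n)
              (Eventually.of_forall (hgnn n))]
            calc ENNReal.ofReal (∫ ω, g n ω ∂ℙ) ≤ ENNReal.ofReal 1 :=
                  ENNReal.ofReal_le_ofReal (hgval n)
              _ = 1 := ENNReal.ofReal_one
    refine ⟨(hρ.mul (hFc₀sm.measurable.comp hX)).aestronglyMeasurable, ?_⟩
    rw [hasFiniteIntegral_iff_ofReal (Eventually.of_forall fun ω =>
      mul_nonneg (hρnn ω) (hFnn c₀ (X ω)))]
    exact lt_of_le_of_lt hlsup ENNReal.one_lt_top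
  -- Step W4 : integrability of the CDF-weighted integrands
  have hIntk : ∀ ℓ' : α → ℝ, Measurable ℓ' → (∀ x, ℓ' x ≤ c₀) →
      Integrable (fun ω => ρ ω * h (X ω) * F (ℓ' (X ω)) (X ω)) ℙ := by
    intro ℓ' hℓ'm hℓ'b
    refine Integrable.mono' hIntF
      (((hρ.mul (hh.comp hX)).mul ((hFsm ℓ' hℓ'm).measurable.comp hX)).aestronglyMeasurable) ?_
    filter_upwards [hae] with ω hω
    rcases hω with h' | hx
    · rw [h']
      simp
    · have h1 : F (ℓ' (X ω)) (X ω) ≤ F c₀ (X ω) := hFmono (X ω) hx (ℓ' (X ω)) (hℓ'b (X ω))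
      have h2 := hFnn (ℓ' (X ω)) (X ω)
      rw [Real.norm_eq_abs, abs_mul, abs_mul, abs_of_nonneg h2]
      rcases hρ01 ω with h' | h'
      · rw [h']; simp [abs_nonneg]
      · rw [h']
        have h3 := hhb (X ω)
        have h4 := abs_nonneg (h (X ω))
        have h5 := hFnn c₀ (X ω)
        simp only [abs_one, one_mul]
        nlinarith
  -- Step W5 : pointwise a.e. identity between CDF differences and the interval integral
  have haeid : ∀ᵐ ω ∂ℙ, ρ ω * h (X ω) * F (ℓ (X ω)) (X ω) - ρ ω * h (X ω) * F 0 (X ω)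
      = ρ ω * h (X ω) * (∫ e in (0:ℝ)..(ℓ (X ω)), f e (X ω)) := by
    filter_upwards [hae] with ω hω
    rcases hω with h' | hx
    · rw [h']; ring
    · have hIOn := hnotB _ hx
      have key : F (ℓ (X ω)) (X ω) - F 0 (X ω) = ∫ e in (0:ℝ)..(ℓ (X ω)), f e (X ω) := by
        have hcb : |ℓ (X ω)| ≤ c₀ := hℓb (X ω)
        have h1 : IntegrableOn (fun e => f e (X ω)) (Set.Iic 0) volume :=
          hIOn.mono_set (Set.Iic_subset_Iic.mpr hc₀)
        by_cases hsign : (0:ℝ) ≤ ℓ (X ω)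
        · have hi3 : IntegrableOn (fun e => f e (X ω)) (Set.Ioc 0 (ℓ (X ω))) volume :=
            hIOn.mono_set (fun e he => le_trans he.2 (le_trans (le_abs_self _) hcb))
          have hu : Set.Iic (0:ℝ) ∪ Set.Ioc 0 (ℓ (X ω)) = Set.Iic (ℓ (X ω)) :=
            Set.Iic_union_Ioc_eq_Iic hsign
          have hsplit : F (ℓ (X ω)) (X ω) = F 0 (X ω) + ∫ e in Set.Ioc 0 (ℓ (X ω)), f e (X ω) := by
            simp only [hFdef]
            rw [← hu, setIntegral_union (Set.Iic_disjoint_Ioc le_rfl) measurableSet_Ioc h1 hi3]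
          rw [intervalIntegral.integral_of_le hsign]
          linarith
        · push_neg at hsign
          have hi3 : IntegrableOn (fun e => f e (X ω)) (Set.Ioc (ℓ (X ω)) 0) volume :=
            hIOn.mono_set (fun e he => le_trans he.2 hc₀)
          have hu : Set.Iic (ℓ (X ω)) ∪ Set.Ioc (ℓ (X ω)) 0 = Set.Iic (0:ℝ) :=
            Set.Iic_union_Ioc_eq_Iic hsign.le
          have h2 : IntegrableOn (fun e => f e (X ω)) (Set.Iic (ℓ (X ω))) volume :=
            hIOn.mono_set (Set.Iic_subset_Iic.mpr (le_trans (le_abs_self _) hcb))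
          have hsplit : F 0 (X ω) = F (ℓ (X ω)) (X ω) + ∫ e in Set.Ioc (ℓ (X ω)) 0, f e (X ω) := by
            simp only [hFdef]
            rw [← hu, setIntegral_union (Set.Iic_disjoint_Ioc le_rfl) measurableSet_Ioc h2 hi3]
          rw [intervalIntegral.integral_symm, intervalIntegral.integral_of_le hsign.le]
          linarith
      rw [← mul_sub, key]
  refine ⟨?_, ?_⟩
  · -- integrability of the interval-integral weight
    refine Integrable.mono' hIntF
      ((hρ.mul ((sm_intervalIntegral f hfmeas ℓ hℓ).measurable.comp hX)).aestronglyMeasurable) ?_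
    filter_upwards [hae] with ω hω
    rcases hω with h' | hx
    · rw [h']; simp
    · have hIOn := hnotB _ hx
      have hIbound : |∫ e in (0:ℝ)..(ℓ (X ω)), f e (X ω)| ≤ F c₀ (X ω) := by
        by_cases hsign : (0:ℝ) ≤ ℓ (X ω)
        · rw [intervalIntegral.integral_of_le hsign,
            abs_of_nonneg (setIntegral_nonneg measurableSet_Ioc fun e _ => hfnn e (X ω))]
          refine setIntegral_mono_set hIOn (Eventually.of_forall fun e => hfnn e (X ω))
            (HasSubset.Subset.eventuallyLE ?_)
          exact fun e he => le_trans he.2 (le_trans (le_abs_self _) (hℓb (X ω)))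
        · push_neg at hsign
          rw [intervalIntegral.integral_symm, intervalIntegral.integral_of_le hsign.le, abs_neg,
            abs_of_nonneg (setIntegral_nonneg measurableSet_Ioc fun e _ => hfnn e (X ω))]
          refine setIntegral_mono_set hIOn (Eventually.of_forall fun e => hfnn e (X ω))
            (HasSubset.Subset.eventuallyLE ?_)
          exact fun e he => le_trans he.2 hc₀
      rw [Real.norm_eq_abs, abs_mul]
      rcases hρ01 ω with h' | h'
      · rw [h']; simp [abs_nonneg]
      · rw [h']
        simpa using hIbound
  · -- the difference identity
    have E1 := hdens ℓ h hℓ ⟨c₀, hℓb⟩ hh ⟨1, hhb⟩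
    have E0 := hdens (fun _ => 0) h measurable_const ⟨0, by norm_num⟩ hh ⟨1, hhb⟩
    rw [E1, E0]
    rw [← integral_sub (hIntk ℓ hℓ (fun x => le_trans (le_abs_self _) (hℓb x)))
      (hIntk (fun _ => 0) measurable_const (fun _ => hc₀))]
    exact integral_congr_ae haeid

end Workhorse

section Condexp

variable {Ω : Type*} [MeasureSpace Ω] [IsProbabilityMeasure (ℙ : Measure Ω)]

/-- If all set integrals of an integrable `G` over the sets `{W ≤ w}` vanish, then the
conditional expectation of `G` given `σ(W)` vanishes a.e. -/
lemma condexp_zero_of_forall_Iic (W : Ω → ℝ) (hW : Measurable W) (G : Ω → ℝ)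
    (hGint : Integrable G ℙ) (hG : ∀ w : ℝ, (∫ ω in W ⁻¹' (Set.Iic w), G ω ∂ℙ) = 0) :
    (ℙ : Measure Ω)[G | MeasurableSpace.comap W inferInstance] =ᵐ[ℙ] 0 := by
  -- total integral is zero
  have htot : (∫ ω, G ω ∂ℙ) = 0 := by
    have hlim : Tendsto (fun n : ℕ => ∫ ω in W ⁻¹' (Set.Iic (n:ℝ)), G ω ∂ℙ) atTop
        (nhds (∫ ω, G ω ∂ℙ)) := by
      have : ∀ n : ℕ, (∫ ω in W ⁻¹' (Set.Iic (n:ℝ)), G ω ∂ℙ)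
          = ∫ ω, (W ⁻¹' (Set.Iic (n:ℝ))).indicator G ω ∂ℙ := fun n =>
        (integral_indicator (hW measurableSet_Iic)).symm
      simp only [this]
      apply tendsto_integral_of_dominated_convergence (fun ω => ‖G ω‖)
      · exact fun n => hGint.aestronglyMeasurable.indicator (hW measurableSet_Iic)
      · exact hGint.norm
      · intro n
        filter_upwards with ω
        exact norm_indicator_le_norm_self G ω
      · filter_upwards with ω
        apply tendsto_const_nhds.congr'
        obtain ⟨N, hN⟩ := exists_nat_ge (W ω)
        rw [Filter.EventuallyEq, eventually_atTop]
        refine ⟨N, fun n hn => ?_⟩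
        have : W ω ≤ (n:ℝ) := le_trans hN (Nat.cast_le.mpr hn)
        rw [Set.indicator_of_mem (by simpa using this)]
    have h0 : Tendsto (fun n : ℕ => ∫ ω in W ⁻¹' (Set.Iic (n:ℝ)), G ω ∂ℙ) atTop (nhds 0) := by
      simp only [hG]
      exact tendsto_const_nhds
    exact tendsto_nhds_unique hlim h0
  -- all Borel sets
  have hall : ∀ t : Set ℝ, MeasurableSet t → (∫ ω in W ⁻¹' t, G ω ∂ℙ) = 0 := by
    have hgen : (inferInstance : MeasurableSpace ℝ)
        = MeasurableSpace.generateFrom (Set.range Set.Iic) :=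
      (BorelSpace.measurable_eq (α := ℝ)).trans (borel_eq_generateFrom_Iic ℝ)
    intro t ht
    refine MeasurableSpace.induction_on_inter
      (C := fun t _ => (∫ ω in W ⁻¹' t, G ω ∂ℙ) = 0) hgen isPiSystem_Iic ?_ ?_ ?_ ?_ t ht
    · simp
    · rintro t ⟨w, rfl⟩
      exact hG w
    · intro t htm iht
      have := integral_add_compl (hW htm) hGint
      rw [Set.preimage_compl]
      rw [iht, htot] at this
      linarith
    · intro S hdisj hmeas ihS
      rw [Set.preimage_iUnion, integral_iUnion (fun i => hW (hmeas i))
        (hdisj.mono fun i j hij => hij.preimage W) hGint.integrableOn]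
      simp [ihS]
  -- conclude via the characterization of the conditional expectation
  have hm : MeasurableSpace.comap W inferInstance ≤ (inferInstance : MeasurableSpace Ω) :=
    hW.comap_le
  haveI : SigmaFinite ((ℙ : Measure Ω).trim hm) := by
    haveI := isFiniteMeasure_trim (μ := (ℙ : Measure Ω)) hm
    infer_instance
  refine (ae_eq_condExp_of_forall_setIntegral_eq hm hGint
    (fun s _ _ => (integrable_zero _ _ _).integrableOn) (fun s hs _ => ?_) ?_).symm
  · obtain ⟨t, ht, rfl⟩ := hs
    rw [hall t ht]
    simp
  · exact aestronglyMeasurable_const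

end Condexp

open Classical in
lemma integral_ind_prob {Ω : Type*} [MeasureSpace Ω] [IsProbabilityMeasure (ℙ : Measure Ω)]
    (g : Ω → ℝ) (S : Set Ω) (hS : MeasurableSet S)
    (hg : ∀ ω, g ω = if ω ∈ S then 1 else 0) : (∫ ω, g ω ∂ℙ) = (ℙ S).toReal := by
  rw [← measureReal_def, ← integral_indicator_one hS]
  congr 1
  funext ω
  rw [hg, Set.indicator_apply]
  split <;> simp_all

set_option maxHeartbeats 1000000 in
theorem global_identification
    {Ω : Type*} [MeasureSpace Ω] [IsProbabilityMeasure (ℙ : Measure Ω)]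
    (T Z U W : Ω → ℝ)
    (hT : Measurable T) (hZ : Measurable Z) (hU : Measurable U) (hW : Measurable W)
    (hTnn : ∀ ω, 0 ≤ T ω) (hZnn : ∀ ω, 0 ≤ Z ω) (hUnn : ∀ ω, 0 ≤ U ω)
    (φ0 φ0inv : ℝ → ℝ) (φ1 : ℝ → ℝ → ℝ)
    (hφ0mono : StrictMonoOn φ0 (Set.Ici 0))
    (hφ0nn : ∀ u, 0 ≤ u → 0 ≤ φ0 u)
    (hφ0invnn : ∀ t, 0 ≤ t → 0 ≤ φ0inv t)
    (hφ0inv1 : ∀ u, 0 ≤ u → φ0inv (φ0 u) = u)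
    (hφ0inv2 : ∀ t, 0 ≤ t → φ0 (φ0inv t) = t)
    (hφ1meas : Measurable fun p : ℝ × ℝ => φ1 p.1 p.2)
    (hφ1nn : ∀ z u, 0 ≤ z → 0 ≤ u → 0 ≤ φ1 z u)
    (hφ1mono : ∀ z, 0 ≤ z → StrictMonoOn (φ1 z) (Set.Ici 0))
    (hφ1fix : ∀ z, 0 ≤ z → φ1 z (φ0inv z) = z)
    (hmodel : ∀ᵐ ω ∂ℙ, (φ0 (U ω) < Z ω → T ω = φ0 (U ω)) ∧
      (Z ω ≤ φ0 (U ω) → T ω = φ1 (Z ω) (U ω)))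
    (hUexp : ∀ u, 0 ≤ u → ℙ {ω | U ω ≤ u} = ENNReal.ofReal (1 - Real.exp (-u)))
    (hUW : IndepFun U W ℙ)
    -- the fixed quantile level `u`, with `s* = φ0 u` and `g* = φ1 · u` bounded
    (u : ℝ) (hu : 0 < u)
    (hgbdd : ∃ M, ∀ z, |φ1 z u| ≤ M)
    -- the treatment indicator `D = 1{Z ≤ T}` satisfies `0 < P(D = 1) < 1`
    (hD1pos : 0 < ℙ {ω | Z ω ≤ T ω}) (hD1lt : ℙ {ω | Z ω ≤ T ω} < 1)
    -- conditional densities of `ε = T − s*(1−D) − g*(Z)D`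
    (f0 : ℝ → ℝ → ℝ) (f1 : ℝ → ℝ → ℝ → ℝ)
    (hf0meas : Measurable fun p : ℝ × ℝ => f0 p.1 p.2)
    (hf0nn : ∀ e w, 0 ≤ f0 e w)
    (hf1meas : Measurable fun p : ℝ × ℝ × ℝ => f1 p.1 p.2.1 p.2.2)
    (hf1nn : ∀ e z w, 0 ≤ f1 e z w)
    (hf0dens : ∀ ℓ h : ℝ → ℝ, Measurable ℓ → (∃ M, ∀ x, |ℓ x| ≤ M) →
      Measurable h → (∃ M, ∀ x, |h x| ≤ M) →
      (∫ ω, (if T ω - (if Z ω ≤ T ω then φ1 (Z ω) u else φ0 u) ≤ ℓ (W ω) then (1:ℝ) else 0)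
          * (1 - (if Z ω ≤ T ω then (1:ℝ) else 0)) * h (W ω) ∂ℙ)
        = ∫ ω, (1 - (if Z ω ≤ T ω then (1:ℝ) else 0)) * h (W ω)
            * (∫ e in Set.Iic (ℓ (W ω)), f0 e (W ω)) ∂ℙ)
    (hf1dens : ∀ ℓ h : ℝ × ℝ → ℝ, Measurable ℓ → (∃ M, ∀ x, |ℓ x| ≤ M) →
      Measurable h → (∃ M, ∀ x, |h x| ≤ M) →
      (∫ ω, (if T ω - (if Z ω ≤ T ω then φ1 (Z ω) u else φ0 u) ≤ ℓ (Z ω, W ω) then (1:ℝ) else 0)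
          * (if Z ω ≤ T ω then (1:ℝ) else 0) * h (Z ω, W ω) ∂ℙ)
        = ∫ ω, (if Z ω ≤ T ω then (1:ℝ) else 0) * h (Z ω, W ω)
            * (∫ e in Set.Iic (ℓ (Z ω, W ω)), f1 e (Z ω) (W ω)) ∂ℙ)
    -- Assumption 3.5 (bounded strong completeness)
    (hcomp : ∀ (Δ0 : ℝ) (Δ1 : ℝ → ℝ), Measurable Δ1 → (∃ M, ∀ x, |Δ1 x| ≤ M) →
      (ℙ[fun ω =>
            (Δ0 * (1 - (if Z ω ≤ T ω then (1:ℝ) else 0))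
              + Δ1 (Z ω) * (if Z ω ≤ T ω then (1:ℝ) else 0))
            * ((1 - (if Z ω ≤ T ω then (1:ℝ) else 0))
                  * (∫ δ in (0:ℝ)..1, f0 (δ * Δ0) (W ω))
                + (if Z ω ≤ T ω then (1:ℝ) else 0)
                  * (∫ δ in (0:ℝ)..1, f1 (δ * Δ1 (Z ω)) (Z ω) (W ω)))
          | MeasurableSpace.comap W inferInstance] =ᵐ[ℙ] 0) →
      (fun ω => Δ0 * (1 - (if Z ω ≤ T ω then (1:ℝ) else 0))
          + Δ1 (Z ω) * (if Z ω ≤ T ω then (1:ℝ) else 0)) =ᵐ[ℙ] 0)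
    -- Assumption 3.4 (regularity)
    (fZ : ℝ → ℝ) (hfZmeas : Measurable fZ) (hfZnn : ∀ z, 0 ≤ fZ z)
    (hZlaw : Measure.map Z ℙ = volume.withDensity fun z => ENNReal.ofReal (fZ z))
    (fZD1 : ℝ → ℝ) (hfZD1meas : Measurable fZD1) (hfZD1nn : ∀ z, 0 ≤ fZD1 z)
    (hfZD1 : ∀ h : ℝ → ℝ, Measurable h → (∃ M, ∀ x, |h x| ≤ M) →
      (∫ ω, h (Z ω) * (if Z ω ≤ T ω then (1:ℝ) else 0) ∂ℙ)
        = (ℙ {ω | Z ω ≤ T ω}).toReal * ∫ z, h z * fZD1 z)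
    (K : ℝ) (hK : 0 < K)
    (hdom : ∀ᵐ z ∂(volume : Measure ℝ), (if z ≤ φ0 u then fZ z else 0) ≤ K * fZD1 z) :
    -- conclusion: any solution in the parameter space induces `φ(·,u)` a.s.
    ∀ (ψ0 : ℝ) (ψ1 : ℝ → ℝ), Measurable ψ1 → (∃ M, ∀ x, |ψ1 x| ≤ M) →
      (∀ w : ℝ,
        (ℙ {ω | T ω ≤ ψ0 ∧ T ω < Z ω ∧ W ω ≤ w}).toReal
          + (ℙ {ω | T ω ≤ ψ1 (Z ω) ∧ Z ω ≤ T ω ∧ W ω ≤ w}).toReal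
        = (1 - Real.exp (-u)) * (ℙ {ω | W ω ≤ w}).toReal) →
      ∀ᵐ ω ∂ℙ,
        ψ0 * (if ψ0 < Z ω then (1:ℝ) else 0) + ψ1 (Z ω) * (if Z ω ≤ ψ0 then (1:ℝ) else 0)
          = φ0 u * (if φ0 u < Z ω then (1:ℝ) else 0)
            + φ1 (Z ω) u * (if Z ω ≤ φ0 u then (1:ℝ) else 0) := by
  classical
  obtain ⟨Mg, hMg⟩ := hgbdd
  intro ψ0 ψ1 hψm hψb hsol
  obtain ⟨Mψ, hMψ⟩ := hψb
  -- basic measurability facts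
  have hDmeas : MeasurableSet {ω | Z ω ≤ T ω} := measurableSet_le hZ hT
  have hgm : Measurable fun z => φ1 z u := hφ1meas.comp (measurable_id.prodMk measurable_const)
  have hεm : Measurable fun ω => T ω - (if Z ω ≤ T ω then φ1 (Z ω) u else φ0 u) :=
    hT.sub (Measurable.ite hDmeas (hgm.comp hZ) measurable_const)
  have hρ0m : Measurable fun ω => 1 - (if Z ω ≤ T ω then (1:ℝ) else 0) :=
    (measurable_const.sub (Measurable.ite hDmeas measurable_const measurable_const))
  have hρ1m : Measurable fun ω => (if Z ω ≤ T ω then (1:ℝ) else 0) :=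
    Measurable.ite hDmeas measurable_const measurable_const
  have hρ0_01 : ∀ ω, (1 - (if Z ω ≤ T ω then (1:ℝ) else 0)) = 0
      ∨ (1 - (if Z ω ≤ T ω then (1:ℝ) else 0)) = 1 := by
    intro ω; by_cases h : Z ω ≤ T ω <;> simp [h]
  have hρ1_01 : ∀ ω, (if Z ω ≤ T ω then (1:ℝ) else 0) = 0
      ∨ (if Z ω ≤ T ω then (1:ℝ) else 0) = 1 := by
    intro ω; by_cases h : Z ω ≤ T ω <;> simp [h]
  -- bounds
  have hMg0 : 0 ≤ Mg := le_trans (abs_nonneg _) (hMg 0)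
  have hMψ0 : 0 ≤ Mψ := le_trans (abs_nonneg _) (hMψ 0)
  have hc₀ : (0:ℝ) ≤ |ψ0 - φ0 u| + Mψ + Mg + 1 := by positivity
  have hb0 : ∀ x : ℝ, |(fun _ : ℝ => ψ0 - φ0 u) x| ≤ |ψ0 - φ0 u| + Mψ + Mg + 1 := by
    intro x
    show |ψ0 - φ0 u| ≤ _
    linarith [hMψ0, hMg0]
  have hb1 : ∀ p : ℝ × ℝ, |ψ1 p.1 - φ1 p.1 u| ≤ |ψ0 - φ0 u| + Mψ + Mg + 1 := by
    intro p
    have h1 := hMψ p.1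
    have h2 := hMg p.1
    calc |ψ1 p.1 - φ1 p.1 u| ≤ |ψ1 p.1| + |φ1 p.1 u| := abs_sub (ψ1 p.1) (φ1 p.1 u)
      _ ≤ Mψ + Mg := add_le_add h1 h2
      _ ≤ |ψ0 - φ0 u| + Mψ + Mg + 1 := by linarith [abs_nonneg (ψ0 - φ0 u)]
  -- measurability of the event sets
  have hsetmeas : ∀ (a : Ω → ℝ) (b : Ω → ℝ), Measurable a → Measurable b → ∀ w : ℝ,
      MeasurableSet {ω | T ω ≤ a ω ∧ b ω ≤ 0 ∧ W ω ≤ w} := by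
    intro a b ha hb w
    have : {ω | T ω ≤ a ω ∧ b ω ≤ 0 ∧ W ω ≤ w}
        = {ω | T ω ≤ a ω} ∩ ({ω | b ω ≤ 0} ∩ {ω | W ω ≤ w}) := rfl
    rw [this]
    exact (measurableSet_le hT ha).inter ((measurableSet_le hb measurable_const).inter
      (measurableSet_le hW measurable_const))
  have hmA : ∀ (c : ℝ) (w : ℝ), MeasurableSet {ω | T ω ≤ c ∧ T ω < Z ω ∧ W ω ≤ w} := by
    intro c w
    have : {ω | T ω ≤ c ∧ T ω < Z ω ∧ W ω ≤ w}
        = {ω | T ω ≤ c} ∩ ({ω | T ω < Z ω} ∩ {ω | W ω ≤ w}) := rfl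
    rw [this]
    exact (measurableSet_le hT measurable_const).inter ((measurableSet_lt hT hZ).inter
      (measurableSet_le hW measurable_const))
  have hmB : ∀ (c : Ω → ℝ) (_ : Measurable c) (w : ℝ),
      MeasurableSet {ω | T ω ≤ c ω ∧ Z ω ≤ T ω ∧ W ω ≤ w} := by
    intro c hc w
    have : {ω | T ω ≤ c ω ∧ Z ω ≤ T ω ∧ W ω ≤ w}
        = {ω | T ω ≤ c ω} ∩ ({ω | Z ω ≤ T ω} ∩ {ω | W ω ≤ w}) := rfl
    rw [this]
    exact (measurableSet_le hT hc).inter (hDmeas.inter (measurableSet_le hW measurable_const))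
  -- Step 1 : the true parameters satisfy the identification equation
  have hexp_nn : 0 ≤ 1 - Real.exp (-u) := by
    have : Real.exp (-u) ≤ 1 := Real.exp_le_one_iff.mpr (by linarith)
    linarith
  have htrue : ∀ w : ℝ,
      (ℙ {ω | T ω ≤ φ0 u ∧ T ω < Z ω ∧ W ω ≤ w}).toReal
        + (ℙ {ω | T ω ≤ φ1 (Z ω) u ∧ Z ω ≤ T ω ∧ W ω ≤ w}).toReal
      = (1 - Real.exp (-u)) * (ℙ {ω | W ω ≤ w}).toReal := by
    intro w
    set A : Set Ω := {ω | T ω ≤ φ0 u ∧ T ω < Z ω ∧ W ω ≤ w} with hAdef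
    set B : Set Ω := {ω | T ω ≤ φ1 (Z ω) u ∧ Z ω ≤ T ω ∧ W ω ≤ w} with hBdef
    have hdisj : Disjoint A B := by
      rw [Set.disjoint_left]
      intro ω hA hB
      exact absurd hB.2.1 (not_le.mpr hA.2.1)
    have hcup : (A ∪ B : Set Ω) =ᵐ[ℙ] ((U ⁻¹' Set.Iic u ∩ W ⁻¹' Set.Iic w : Set Ω)) := by
      rw [Filter.eventuallyEq_set]
      filter_upwards [hmodel] with ω hω
      obtain ⟨h1, h2⟩ := hω
      by_cases hcase : φ0 (U ω) < Z ω
      · have hT1 : T ω = φ0 (U ω) := h1 hcase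
        have hTltZ : T ω < Z ω := by rw [hT1]; exact hcase
        have hiff : T ω ≤ φ0 u ↔ U ω ≤ u := by
          rw [hT1]
          exact hφ0mono.le_iff_le (hUnn ω) hu.le
        constructor
        · rintro (⟨ha1, _, ha3⟩ | ⟨_, hb2, _⟩)
          · exact ⟨hiff.mp ha1, ha3⟩
          · exact absurd hb2 (not_le.mpr hTltZ)
        · rintro ⟨hu1, hw1⟩
          exact Or.inl ⟨hiff.mpr hu1, hTltZ, hw1⟩
      · push_neg at hcase
        have hT1 : T ω = φ1 (Z ω) (U ω) := h2 hcase
        have hinv : φ0inv (Z ω) ≤ U ω := by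
          have := hφ0inv2 (Z ω) (hZnn ω)
          exact (hφ0mono.le_iff_le (hφ0invnn _ (hZnn ω)) (hUnn ω)).mp (by rw [this]; exact hcase)
        have hZleT : Z ω ≤ T ω := by
          rw [hT1]
          calc Z ω = φ1 (Z ω) (φ0inv (Z ω)) := (hφ1fix _ (hZnn ω)).symm
            _ ≤ φ1 (Z ω) (U ω) :=
              ((hφ1mono (Z ω) (hZnn ω)).le_iff_le (hφ0invnn _ (hZnn ω)) (hUnn ω)).mpr hinv
        have hiff : T ω ≤ φ1 (Z ω) u ↔ U ω ≤ u := by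
          rw [hT1]
          exact (hφ1mono (Z ω) (hZnn ω)).le_iff_le (hUnn ω) hu.le
        constructor
        · rintro (⟨_, ha2, _⟩ | ⟨hb1, _, hb3⟩)
          · exact absurd hZleT (not_le.mpr ha2)
          · exact ⟨hiff.mp hb1, hb3⟩
        · rintro ⟨hu1, hw1⟩
          exact Or.inr ⟨hiff.mpr hu1, hZleT, hw1⟩
    have hAB : ℙ A + ℙ B = ENNReal.ofReal (1 - Real.exp (-u)) * ℙ {ω | W ω ≤ w} := by
      rw [← measure_union hdisj (hmB _ (hgm.comp hZ) w), measure_congr hcup,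
        hUW.measure_inter_preimage_eq_mul _ _ measurableSet_Iic measurableSet_Iic]
      congr 1
      exact hUexp u hu.le
    have := congrArg ENNReal.toReal hAB
    rw [ENNReal.toReal_add (measure_ne_top _ _) (measure_ne_top _ _), ENNReal.toReal_mul,
      ENNReal.toReal_ofReal hexp_nn] at this
    exact this
  -- indicator test functions
  have hhwm : ∀ w : ℝ, Measurable fun x : ℝ => if x ≤ w then (1:ℝ) else 0 := fun w =>
    Measurable.ite (measurableSet_le measurable_id measurable_const)
      measurable_const measurable_const
  have hhwb : ∀ w x : ℝ, |if x ≤ w then (1:ℝ) else 0| ≤ 1 := fun w x => by split <;> norm_num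
  have hh1m : ∀ w : ℝ, Measurable fun p : ℝ × ℝ => if p.2 ≤ w then (1:ℝ) else 0 := fun w =>
    Measurable.ite (measurableSet_le measurable_snd measurable_const)
      measurable_const measurable_const
  have hh1b : ∀ (w : ℝ) (p : ℝ × ℝ), |if p.2 ≤ w then (1:ℝ) else 0| ≤ 1 := fun w p => by
    split <;> norm_num
  -- conversions between the density-form integrals and probabilities
  have hconv0 : ∀ (ℓR : ℝ) (c : ℝ), (∀ t : ℝ, t - φ0 u ≤ ℓR ↔ t ≤ c) → ∀ w : ℝ,
      (∫ ω, (if T ω - (if Z ω ≤ T ω then φ1 (Z ω) u else φ0 u) ≤ ℓR then (1:ℝ) else 0)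
        * (1 - (if Z ω ≤ T ω then (1:ℝ) else 0)) * (if W ω ≤ w then (1:ℝ) else 0) ∂ℙ)
      = (ℙ {ω | T ω ≤ c ∧ T ω < Z ω ∧ W ω ≤ w}).toReal := by
    intro ℓR c hiff w
    apply integral_ind_prob _ _ (hmA c w)
    intro ω
    by_cases hzt : Z ω ≤ T ω
    · simp only [if_pos hzt]
      have hnot : ω ∉ {ω | T ω ≤ c ∧ T ω < Z ω ∧ W ω ≤ w} :=
        fun hc => absurd hzt (not_le.mpr hc.2.1)
      rw [if_neg hnot]
      ring
    · have h2 : T ω < Z ω := not_le.mp hzt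
      simp only [Set.mem_setOf_eq, if_neg hzt, hiff (T ω)]
      by_cases hT' : T ω ≤ c <;> by_cases hW' : W ω ≤ w <;> simp [hT', hW', h2]
  have hconv1 : ∀ (ℓR : ℝ → ℝ) (c : Ω → ℝ) (_ : Measurable c),
      (∀ ω, Z ω ≤ T ω → (T ω - φ1 (Z ω) u ≤ ℓR (Z ω) ↔ T ω ≤ c ω)) → ∀ w : ℝ,
      (∫ ω, (if T ω - (if Z ω ≤ T ω then φ1 (Z ω) u else φ0 u) ≤ ℓR (Z ω) then (1:ℝ) else 0)
        * (if Z ω ≤ T ω then (1:ℝ) else 0) * (if W ω ≤ w then (1:ℝ) else 0) ∂ℙ)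
      = (ℙ {ω | T ω ≤ c ω ∧ Z ω ≤ T ω ∧ W ω ≤ w}).toReal := by
    intro ℓR c hcm hiff w
    apply integral_ind_prob _ _ (hmB c hcm w)
    intro ω
    by_cases hzt : Z ω ≤ T ω
    · simp only [Set.mem_setOf_eq, if_pos hzt, hiff ω hzt]
      by_cases hT' : T ω ≤ c ω <;> by_cases hW' : W ω ≤ w <;> simp [hT', hW', hzt]
    · simp only [if_neg hzt]
      have hnot : ω ∉ {ω | T ω ≤ c ω ∧ Z ω ≤ T ω ∧ W ω ≤ w} := fun hc => absurd hc.2.1 hzt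
      rw [if_neg hnot]
      ring
  -- the key vanishing family of set integrals
  have hkey : ∀ w : ℝ, (∫ ω in W ⁻¹' (Set.Iic w),
      ((1 - (if Z ω ≤ T ω then (1:ℝ) else 0)) * (∫ e in (0:ℝ)..(ψ0 - φ0 u), f0 e (W ω))
        + (if Z ω ≤ T ω then (1:ℝ) else 0)
          * (∫ e in (0:ℝ)..(ψ1 (Z ω) - φ1 (Z ω) u), f1 e (Z ω) (W ω))) ∂ℙ) = 0 := by
    intro w
    obtain ⟨hint0, heq0⟩ := workhorse W hW
      (fun ω => 1 - (if Z ω ≤ T ω then (1:ℝ) else 0))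
      (fun ω => T ω - (if Z ω ≤ T ω then φ1 (Z ω) u else φ0 u))
      hρ0m hρ0_01 hεm f0 hf0meas hf0nn hf0dens
      (fun _ : ℝ => ψ0 - φ0 u) measurable_const _ hc₀ hb0
      (fun x => if x ≤ w then (1:ℝ) else 0) (hhwm w) (hhwb w)
    obtain ⟨hint1, heq1⟩ := workhorse (fun ω => (Z ω, W ω)) (hZ.prodMk hW)
      (fun ω => (if Z ω ≤ T ω then (1:ℝ) else 0))
      (fun ω => T ω - (if Z ω ≤ T ω then φ1 (Z ω) u else φ0 u))
      hρ1m hρ1_01 hεm (fun e p => f1 e p.1 p.2) hf1meas (fun e p => hf1nn e p.1 p.2) hf1dens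
      (fun p : ℝ × ℝ => ψ1 p.1 - φ1 p.1 u)
      ((hψm.comp measurable_fst).sub (hgm.comp measurable_fst)) _ hc₀ hb1
      (fun p : ℝ × ℝ => if p.2 ≤ w then (1:ℝ) else 0) (hh1m w) (hh1b w)
    rw [hconv0 (ψ0 - φ0 u) ψ0 (fun t => sub_le_sub_iff_right _) w,
      hconv0 0 (φ0 u) (fun t => sub_nonpos) w] at heq0
    rw [hconv1 (fun z => ψ1 z - φ1 z u) (fun ω => ψ1 (Z ω)) (hψm.comp hZ)
        (fun ω _ => sub_le_sub_iff_right _) w,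
      hconv1 (fun _ => 0) (fun ω => φ1 (Z ω) u) (hgm.comp hZ)
        (fun ω _ => sub_nonpos) w] at heq1
    have hI0m : Measurable fun ω => ∫ e in (0:ℝ)..(ψ0 - φ0 u), f0 e (W ω) :=
      ((sm_intervalIntegral f0 hf0meas (fun _ => ψ0 - φ0 u) measurable_const).measurable).comp hW
    have hI1m : Measurable fun ω => ∫ e in (0:ℝ)..(ψ1 (Z ω) - φ1 (Z ω) u), f1 e (Z ω) (W ω) := by
      have h' := ((sm_intervalIntegral (fun e p => f1 e p.1 p.2) hf1meas
        (fun p : ℝ × ℝ => ψ1 p.1 - φ1 p.1 u)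
        ((hψm.comp measurable_fst).sub (hgm.comp measurable_fst))).measurable).comp
        (hZ.prodMk hW)
      exact h'
    have int0' : Integrable (fun ω => (1 - (if Z ω ≤ T ω then (1:ℝ) else 0))
        * (if W ω ≤ w then (1:ℝ) else 0) * (∫ e in (0:ℝ)..(ψ0 - φ0 u), f0 e (W ω))) ℙ := by
      refine hint0.abs.mono' (((hρ0m.mul ((hhwm w).comp hW)).mul hI0m).aestronglyMeasurable) ?_
      filter_upwards with ω
      have hrw : (1 - (if Z ω ≤ T ω then (1:ℝ) else 0)) * (if W ω ≤ w then (1:ℝ) else 0)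
          * (∫ e in (0:ℝ)..(ψ0 - φ0 u), f0 e (W ω))
          = ((1 - (if Z ω ≤ T ω then (1:ℝ) else 0)) * (∫ e in (0:ℝ)..(ψ0 - φ0 u), f0 e (W ω)))
            * (if W ω ≤ w then (1:ℝ) else 0) := by ring
      rw [Real.norm_eq_abs, hrw, abs_mul]
      exact mul_le_of_le_one_right (abs_nonneg _) (hhwb w (W ω))
    have int1' : Integrable (fun ω => (if Z ω ≤ T ω then (1:ℝ) else 0)
        * (if W ω ≤ w then (1:ℝ) else 0)
        * (∫ e in (0:ℝ)..(ψ1 (Z ω) - φ1 (Z ω) u), f1 e (Z ω) (W ω))) ℙ := by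
      refine hint1.abs.mono' (((hρ1m.mul ((hhwm w).comp hW)).mul hI1m).aestronglyMeasurable) ?_
      filter_upwards with ω
      have hrw : (if Z ω ≤ T ω then (1:ℝ) else 0) * (if W ω ≤ w then (1:ℝ) else 0)
          * (∫ e in (0:ℝ)..(ψ1 (Z ω) - φ1 (Z ω) u), f1 e (Z ω) (W ω))
          = ((if Z ω ≤ T ω then (1:ℝ) else 0)
              * (∫ e in (0:ℝ)..(ψ1 (Z ω) - φ1 (Z ω) u), f1 e (Z ω) (W ω)))
            * (if W ω ≤ w then (1:ℝ) else 0) := by ring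
      rw [Real.norm_eq_abs, hrw, abs_mul]
      exact mul_le_of_le_one_right (abs_nonneg _) (hhwb w (W ω))
    calc (∫ ω in W ⁻¹' (Set.Iic w),
        ((1 - (if Z ω ≤ T ω then (1:ℝ) else 0)) * (∫ e in (0:ℝ)..(ψ0 - φ0 u), f0 e (W ω))
          + (if Z ω ≤ T ω then (1:ℝ) else 0)
            * (∫ e in (0:ℝ)..(ψ1 (Z ω) - φ1 (Z ω) u), f1 e (Z ω) (W ω))) ∂ℙ)
        = ∫ ω, (if W ω ≤ w then (1:ℝ) else 0)
            * ((1 - (if Z ω ≤ T ω then (1:ℝ) else 0)) * (∫ e in (0:ℝ)..(ψ0 - φ0 u), f0 e (W ω))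
              + (if Z ω ≤ T ω then (1:ℝ) else 0)
                * (∫ e in (0:ℝ)..(ψ1 (Z ω) - φ1 (Z ω) u), f1 e (Z ω) (W ω))) ∂ℙ := by
          rw [← integral_indicator (hW measurableSet_Iic)]
          congr 1
          funext ω
          rw [Set.indicator_apply]
          by_cases hmem : ω ∈ W ⁻¹' (Set.Iic w)
          · rw [if_pos hmem, if_pos (show W ω ≤ w from hmem), one_mul]
          · rw [if_neg hmem, if_neg (show ¬ W ω ≤ w from hmem), zero_mul]
      _ = ∫ ω, ((1 - (if Z ω ≤ T ω then (1:ℝ) else 0)) * (if W ω ≤ w then (1:ℝ) else 0)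
              * (∫ e in (0:ℝ)..(ψ0 - φ0 u), f0 e (W ω))
            + (if Z ω ≤ T ω then (1:ℝ) else 0) * (if W ω ≤ w then (1:ℝ) else 0)
              * (∫ e in (0:ℝ)..(ψ1 (Z ω) - φ1 (Z ω) u), f1 e (Z ω) (W ω))) ∂ℙ :=
          integral_congr_ae (Eventually.of_forall fun ω => by ring)
      _ = (∫ ω, (1 - (if Z ω ≤ T ω then (1:ℝ) else 0)) * (if W ω ≤ w then (1:ℝ) else 0)
              * (∫ e in (0:ℝ)..(ψ0 - φ0 u), f0 e (W ω)) ∂ℙ)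
          + ∫ ω, (if Z ω ≤ T ω then (1:ℝ) else 0) * (if W ω ≤ w then (1:ℝ) else 0)
              * (∫ e in (0:ℝ)..(ψ1 (Z ω) - φ1 (Z ω) u), f1 e (Z ω) (W ω)) ∂ℙ :=
          integral_add int0' int1'
      _ = 0 := by
          rw [← heq0, ← heq1]
          have hs := hsol w
          have ht := htrue w
          linarith
  -- integrability and measurability of the combined weight function
  obtain ⟨hint0g, _⟩ := workhorse W hW
    (fun ω => 1 - (if Z ω ≤ T ω then (1:ℝ) else 0))
    (fun ω => T ω - (if Z ω ≤ T ω then φ1 (Z ω) u else φ0 u))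
    hρ0m hρ0_01 hεm f0 hf0meas hf0nn hf0dens
    (fun _ : ℝ => ψ0 - φ0 u) measurable_const _ hc₀ hb0
    (fun x => if x ≤ (0:ℝ) then (1:ℝ) else 0) (hhwm 0) (hhwb 0)
  obtain ⟨hint1g, _⟩ := workhorse (fun ω => (Z ω, W ω)) (hZ.prodMk hW)
    (fun ω => (if Z ω ≤ T ω then (1:ℝ) else 0))
    (fun ω => T ω - (if Z ω ≤ T ω then φ1 (Z ω) u else φ0 u))
    hρ1m hρ1_01 hεm (fun e p => f1 e p.1 p.2) hf1meas (fun e p => hf1nn e p.1 p.2) hf1dens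
    (fun p : ℝ × ℝ => ψ1 p.1 - φ1 p.1 u)
    ((hψm.comp measurable_fst).sub (hgm.comp measurable_fst)) _ hc₀ hb1
    (fun p : ℝ × ℝ => if p.2 ≤ (0:ℝ) then (1:ℝ) else 0) (hh1m 0) (hh1b 0)
  have hGint : Integrable (fun ω =>
      (1 - (if Z ω ≤ T ω then (1:ℝ) else 0)) * (∫ e in (0:ℝ)..(ψ0 - φ0 u), f0 e (W ω))
        + (if Z ω ≤ T ω then (1:ℝ) else 0)
          * (∫ e in (0:ℝ)..(ψ1 (Z ω) - φ1 (Z ω) u), f1 e (Z ω) (W ω))) ℙ :=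
    hint0g.add hint1g
  -- the conditional expectation of the weight vanishes
  have hcondG := condexp_zero_of_forall_Iic W hW _ hGint hkey
  -- identify with the completeness-hypothesis integrand
  have hfunG : (fun ω =>
      ((ψ0 - φ0 u) * (1 - (if Z ω ≤ T ω then (1:ℝ) else 0))
        + (ψ1 (Z ω) - φ1 (Z ω) u) * (if Z ω ≤ T ω then (1:ℝ) else 0))
      * ((1 - (if Z ω ≤ T ω then (1:ℝ) else 0))
            * (∫ δ in (0:ℝ)..1, f0 (δ * (ψ0 - φ0 u)) (W ω))
          + (if Z ω ≤ T ω then (1:ℝ) else 0)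
            * (∫ δ in (0:ℝ)..1, f1 (δ * (ψ1 (Z ω) - φ1 (Z ω) u)) (Z ω) (W ω))))
      = fun ω =>
      (1 - (if Z ω ≤ T ω then (1:ℝ) else 0)) * (∫ e in (0:ℝ)..(ψ0 - φ0 u), f0 e (W ω))
        + (if Z ω ≤ T ω then (1:ℝ) else 0)
          * (∫ e in (0:ℝ)..(ψ1 (Z ω) - φ1 (Z ω) u), f1 e (Z ω) (W ω)) := by
    funext ω
    by_cases hzt : Z ω ≤ T ω
    · simp only [if_pos hzt, sub_self, zero_mul, one_mul, mul_zero, mul_one, zero_add, add_zero]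
      have hc := intervalIntegral.smul_integral_comp_mul_right (a := (0:ℝ)) (b := (1:ℝ))
        (fun e => f1 e (Z ω) (W ω)) (ψ1 (Z ω) - φ1 (Z ω) u)
      rw [smul_eq_mul] at hc
      simpa using hc
    · simp only [if_neg hzt, sub_zero, zero_mul, one_mul, mul_zero, mul_one, zero_add, add_zero]
      have hc := intervalIntegral.smul_integral_comp_mul_right (a := (0:ℝ)) (b := (1:ℝ))
        (fun e => f0 e (W ω)) (ψ0 - φ0 u)
      rw [smul_eq_mul] at hc
      simpa using hc
  -- apply completeness
  have hce := hcomp (ψ0 - φ0 u) (fun z => ψ1 z - φ1 z u) (hψm.sub hgm)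
    ⟨Mψ + Mg, fun z => le_trans (abs_sub _ _) (add_le_add (hMψ z) (hMg z))⟩
    (by rw [hfunG]; exact hcondG)
  -- consequence 1 : ψ0 = φ0 u
  have hψ0eq : ψ0 = φ0 u := by
    by_contra hne
    have hdelta : ψ0 - φ0 u ≠ 0 := sub_ne_zero.mpr hne
    have hall : ∀ᵐ ω ∂ℙ, Z ω ≤ T ω := by
      filter_upwards [hce] with ω hω
      by_contra hzt
      simp only [if_neg hzt, Pi.zero_apply, sub_zero, mul_one, mul_zero, add_zero] at hω
      exact hdelta hω
    have h0 : ℙ {ω | Z ω ≤ T ω}ᶜ = 0 := by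
      rw [Set.compl_setOf]
      exact ae_iff.mp hall
    have h1 : (1:ENNReal) - ℙ {ω | Z ω ≤ T ω} = 0 := by
      rw [← prob_compl_eq_one_sub hDmeas]
      exact h0
    exact absurd (tsub_eq_zero_iff_le.mp h1) (not_le.mpr hD1lt)
  -- consequence 2 : ψ1 (Z ω) = φ1 (Z ω) u a.e. on the event {Z ≤ T}
  have hΔ1ae : ∀ᵐ ω ∂ℙ, Z ω ≤ T ω → ψ1 (Z ω) = φ1 (Z ω) u := by
    filter_upwards [hce] with ω hω hzt
    simp only [if_pos hzt, Pi.zero_apply, sub_self, mul_zero, mul_one, zero_add] at hω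
    exact sub_eq_zero.mp hω
  -- regularity : transfer to the event {Z ≤ φ0 u}
  have hA : ∀ n : ℕ, MeasurableSet {z : ℝ | ψ1 z ≠ φ1 z u ∧ fZD1 z ≤ n ∧ |z| ≤ n} := by
    intro n
    have h1 : MeasurableSet {z : ℝ | ψ1 z = φ1 z u} := measurableSet_eq_fun hψm hgm
    have : {z : ℝ | ψ1 z ≠ φ1 z u ∧ fZD1 z ≤ n ∧ |z| ≤ n}
        = {z | ψ1 z = φ1 z u}ᶜ ∩ ({z | fZD1 z ≤ n} ∩ {z | |z| ≤ n}) := rfl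
    rw [this]
    exact h1.compl.inter ((measurableSet_le hfZD1meas measurable_const).inter
      (measurableSet_le (measurable_id.abs) measurable_const))
  have hfZD1zero : ∀ᵐ z ∂(volume : Measure ℝ), ψ1 z ≠ φ1 z u → fZD1 z = 0 := by
    have hstep : ∀ n : ℕ, ∀ᵐ z ∂(volume : Measure ℝ),
        z ∈ {z : ℝ | ψ1 z ≠ φ1 z u ∧ fZD1 z ≤ n ∧ |z| ≤ n} → fZD1 z = 0 := by
      intro n
      set An := {z : ℝ | ψ1 z ≠ φ1 z u ∧ fZD1 z ≤ n ∧ |z| ≤ n} with hAndef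
      have hm : Measurable fun z : ℝ => if z ∈ An then (1:ℝ) else 0 :=
        Measurable.ite (hA n) measurable_const measurable_const
      have hb : ∀ z : ℝ, |if z ∈ An then (1:ℝ) else 0| ≤ 1 := fun z => by split <;> norm_num
      have heq := hfZD1 (fun z => if z ∈ An then (1:ℝ) else 0) hm ⟨1, hb⟩
      have hLHS : (∫ ω, (if Z ω ∈ An then (1:ℝ) else 0)
          * (if Z ω ≤ T ω then (1:ℝ) else 0) ∂ℙ) = 0 := by
        refine integral_eq_zero_of_ae ?_
        filter_upwards [hΔ1ae] with ω hω
        simp only [Pi.zero_apply]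
        by_cases hzt : Z ω ≤ T ω
        · have : Z ω ∉ An := fun hmem => hmem.1 (hω hzt)
          rw [if_neg this, zero_mul]
        · rw [if_neg hzt, mul_zero]
      rw [hLHS] at heq
      have hP : (ℙ {ω | Z ω ≤ T ω}).toReal ≠ 0 :=
        (ENNReal.toReal_pos hD1pos.ne' (measure_ne_top _ _)).ne'
      have hZero : (∫ z, (if z ∈ An then (1:ℝ) else 0) * fZD1 z) = 0 := by
        rcases mul_eq_zero.mp heq.symm with h' | h'
        · exact absurd h' hP
        · exact h'
      have hnn : ∀ z, 0 ≤ (if z ∈ An then (1:ℝ) else 0) * fZD1 z := fun z =>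
        mul_nonneg (by split <;> norm_num) (hfZD1nn z)
      have hint : Integrable (fun z => (if z ∈ An then (1:ℝ) else 0) * fZD1 z) := by
        refine Integrable.mono' (g := fun z => (Set.Icc (-(n:ℝ)) n).indicator
          (fun _ => (n:ℝ)) z) ?_ (hm.mul hfZD1meas).aestronglyMeasurable ?_
        · rw [integrable_indicator_iff measurableSet_Icc]
          exact integrableOn_const measure_Icc_lt_top.ne
        · filter_upwards with z
          rw [Real.norm_eq_abs, abs_of_nonneg (hnn z)]
          by_cases hmem : z ∈ An
          · rw [if_pos hmem, one_mul, Set.indicator_of_mem (by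
              rw [Set.mem_Icc]
              constructor <;> [linarith [neg_abs_le z, hmem.2.2]; linarith [le_abs_self z, hmem.2.2]])]
            exact hmem.2.1
          · rw [if_neg hmem, zero_mul, Set.indicator_apply]
            split
            · exact Nat.cast_nonneg n
            · exact le_refl 0
      have := (integral_eq_zero_iff_of_nonneg hnn hint).mp hZero
      filter_upwards [this] with z hz hmem
      rw [if_pos hmem, one_mul] at hz
      exact hz
    have hall := (ae_all_iff.mpr hstep : ∀ᵐ z ∂(volume : Measure ℝ), ∀ n : ℕ,
      z ∈ {z : ℝ | ψ1 z ≠ φ1 z u ∧ fZD1 z ≤ n ∧ |z| ≤ n} → fZD1 z = 0)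
    filter_upwards [hall] with z hz hne
    obtain ⟨n, hn⟩ := exists_nat_ge (max (fZD1 z) |z|)
    exact hz n ⟨hne, le_trans (le_max_left _ _) hn, le_trans (le_max_right _ _) hn⟩
  -- hence fZ vanishes a.e. on the bad set below φ0 u
  have hfZzero : ∀ᵐ z ∂(volume : Measure ℝ), (ψ1 z ≠ φ1 z u ∧ z ≤ φ0 u) → fZ z = 0 := by
    filter_upwards [hfZD1zero, hdom] with z h1 h2 h3
    have h4 : fZD1 z = 0 := h1 h3.1
    rw [h4, mul_zero] at h2
    rw [if_pos h3.2] at h2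
    exact le_antisymm h2 (hfZnn z)
  -- the bad set has Z-measure zero
  have hbadmeas : MeasurableSet {z : ℝ | ψ1 z ≠ φ1 z u ∧ z ≤ φ0 u} := by
    have h1 : MeasurableSet {z : ℝ | ψ1 z = φ1 z u} := measurableSet_eq_fun hψm hgm
    have : {z : ℝ | ψ1 z ≠ φ1 z u ∧ z ≤ φ0 u}
        = {z | ψ1 z = φ1 z u}ᶜ ∩ {z | z ≤ φ0 u} := rfl
    rw [this]
    exact h1.compl.inter (measurableSet_le measurable_id measurable_const)
  have hbad0 : ℙ (Z ⁻¹' {z : ℝ | ψ1 z ≠ φ1 z u ∧ z ≤ φ0 u}) = 0 := by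
    rw [← Measure.map_apply hZ hbadmeas, hZlaw, withDensity_apply _ hbadmeas]
    have : ∀ᵐ z ∂((volume : Measure ℝ).restrict {z : ℝ | ψ1 z ≠ φ1 z u ∧ z ≤ φ0 u}),
        ENNReal.ofReal (fZ z) = 0 := by
      filter_upwards [ae_restrict_mem hbadmeas, ae_restrict_of_ae hfZzero] with z hz h
      rw [h hz]
      simp
    rw [lintegral_congr_ae this, lintegral_zero]
  have hbadae : ∀ᵐ ω ∂ℙ, ¬(ψ1 (Z ω) ≠ φ1 (Z ω) u ∧ Z ω ≤ φ0 u) := by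
    have := (measure_eq_zero_iff_ae_notMem (μ := (ℙ : Measure Ω))).mp hbad0
    filter_upwards [this] with ω hω
    exact hω
  -- conclusion
  filter_upwards [hbadae] with ω hω
  rw [hψ0eq]
  by_cases hz : Z ω ≤ φ0 u
  · have hψ1 : ψ1 (Z ω) = φ1 (Z ω) u := by
      by_contra hne
      exact hω ⟨hne, hz⟩
    rw [hψ1]
  · rw [if_neg hz, mul_zero, mul_zero]
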